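/- Let f(ζ) = −log(1−ζ)/ζ² − 1/ζ − 1/2 on ℂ \ [1, ∞), where log is the principal branch (with the singularity at ζ = 0 removable). Then Re f(ζ) > −1 for all ζ in the domain, with Re f(x) ≥ −1 on the real axis and equality only at x = 2; moreover f(ζ) → −1/2 as ζ → ∞. -/

import Mathlib

open Real Complex Filter Set Metric Topology

/-- The function `f(ζ) = -log(1-ζ)/ζ² - 1/ζ - 1/2`, with the removable
singularity at `ζ = 0` filled in by `f(0) = 0`. -/
noncomputable def ffun (ζ : ℂ) : ℂ :=
  if ζ = 0 then 0
  else -Complex.log (1 - ζ) / ζ ^ 2 - 1 / ζ - 1 / 2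

lemma ffun_ne (ζ : ℂ) (h : ζ ≠ 0) :
    ffun ζ = -Complex.log (1 - ζ) / ζ ^ 2 - 1 / ζ - 1 / 2 := if_neg h

lemma Q_pos {x : ℝ} (h1 : x ≠ 1) (h0 : x ≠ 0) (h2 : x ≠ 2) :
    0 < x^2/2 - x - Real.log |1-x| := by
  have hpos : 0 < |1-x| := abs_pos.2 (by intro h; apply h1; linarith)
  have habs : |1-x| ≠ 1 := by
    intro h
    rcases abs_eq (by norm_num : (0:ℝ) ≤ 1) |>.mp h with h' | h'
    · exact h0 (by linarith)
    · exact h2 (by linarith)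
  have hlog := Real.log_lt_sub_one_of_pos hpos habs
  rcases le_or_gt x 1 with hx | hx
  · rw [_root_.abs_of_nonneg (by linarith : (0:ℝ) ≤ 1 - x)] at hlog ⊢
    have : 0 < x^2 := by positivity
    nlinarith
  · rw [_root_.abs_of_nonpos (by linarith : (1:ℝ) - x ≤ 0), neg_sub] at hlog ⊢
    nlinarith [sq_nonneg (x-2)]

lemma Q_nonneg {x : ℝ} (h1 : x ≠ 1) : 0 ≤ x^2/2 - x - Real.log |1-x| := by
  rcases eq_or_ne x 0 with rfl | h0
  · norm_num
  rcases eq_or_ne x 2 with rfl | h2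
  · norm_num
  · exact (Q_pos h1 h0 h2).le

lemma ffun_re_real (x : ℝ) (h0 : x ≠ 0) :
    (ffun x).re = -Real.log |1-x| / x^2 - 1/x - 1/2 := by
  have h0' : (x:ℂ) ≠ 0 := Complex.ofReal_ne_zero.mpr h0
  rw [ffun_ne _ h0']
  have e1 : (1 : ℂ) - x = ((1 - x : ℝ) : ℂ) := by push_cast; ring
  have e2 : (x:ℂ)^2 = ((x^2 : ℝ) : ℂ) := by push_cast; ring
  have e3 : (1 / (x:ℂ)) = ((1/x : ℝ) : ℂ) := by push_cast; ring
  rw [e1, e2, e3]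
  simp only [Complex.sub_re, Complex.div_ofReal_re, Complex.neg_re, Complex.log_re,
    Complex.norm_real, Real.norm_eq_abs, Complex.ofReal_re]
  norm_num

lemma ffun_re_real_add_one (x : ℝ) (h0 : x ≠ 0) :
    (ffun x).re + 1 = (x^2/2 - x - Real.log |1-x|) / x^2 := by
  have hx2 : (x:ℝ)^2 ≠ 0 := pow_ne_zero 2 h0
  rw [ffun_re_real x h0]
  field_simp
  ring

lemma ffun_re_real_ge {x : ℝ} (h1 : x ≠ 1) : -1 ≤ (ffun x).re := by
  rcases eq_or_ne x 0 with rfl | h0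
  · simp [ffun]
  · have h := ffun_re_real_add_one x h0
    have hq := Q_nonneg h1
    have hx2 : (0:ℝ) < x^2 := by positivity
    nlinarith [div_nonneg hq hx2.le]

lemma ffun_re_real_gt {x : ℝ} (h1 : x ≠ 1) (h2 : x ≠ 2) : -1 < (ffun x).re := by
  rcases eq_or_ne x 0 with rfl | h0
  · simp [ffun]
  · have h := ffun_re_real_add_one x h0
    have hq := Q_pos h1 h0 h2
    have hx2 : (0:ℝ) < x^2 := by positivity
    nlinarith [div_pos hq hx2]

lemma ffun_re_two : (ffun ((2:ℝ))).re = -1 := by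
  have h := ffun_re_real_add_one 2 (by norm_num)
  norm_num at h
  push_cast at h ⊢
  linarith

lemma abs_log_le {ζ : ℂ} (h : 2 ≤ ‖ζ‖) :
    ‖Complex.log (1 - ζ)‖ ≤ ‖ζ‖ + π := by
  have h1 : ‖ζ‖ - 1 ≤ ‖1 - ζ‖ := by
    have h := norm_sub_norm_le ζ (1:ℂ)
    rw [norm_sub_rev] at h
    simpa using h
  have h1' : 1 ≤ ‖1 - ζ‖ := by linarith
  have h2 : ‖1 - ζ‖ ≤ 1 + ‖ζ‖ := by
    calc ‖1 - ζ‖ ≤ ‖1‖ + ‖ζ‖ := norm_sub_le 1 ζ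
    _ = 1 + ‖ζ‖ := by simp
  calc ‖Complex.log (1 - ζ)‖
      ≤ |(Complex.log (1 - ζ)).re| + |(Complex.log (1 - ζ)).im| :=
        Complex.norm_le_abs_re_add_abs_im _
    _ ≤ ‖ζ‖ + π := by
        rw [Complex.log_re, Complex.log_im]
        have : |Real.log (‖1 - ζ‖)| = Real.log (‖1 - ζ‖) :=
          _root_.abs_of_nonneg (Real.log_nonneg h1')
        rw [this]
        have hle : Real.log (‖1 - ζ‖) ≤ ‖1 - ζ‖ - 1 :=
          Real.log_le_sub_one_of_pos (by linarith)
        have := Complex.abs_arg_le_pi (1 - ζ)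
        linarith

lemma ffun_tendsto : Tendsto ffun (Filter.comap (fun z : ℂ => ‖z‖) atTop) (nhds (-1/2 : ℂ)) := by
  have habs : Tendsto (fun ζ : ℂ => ‖ζ‖) (Filter.comap (fun z : ℂ => ‖z‖) atTop) atTop :=
    tendsto_comap
  have hev2 : ∀ᶠ ζ : ℂ in Filter.comap (fun z : ℂ => ‖z‖) atTop, 2 ≤ ‖ζ‖ :=
    habs.eventually_ge_atTop 2
  have h1 : Tendsto (fun ζ : ℂ => 1/ζ) (Filter.comap (fun z : ℂ => ‖z‖) atTop) (𝓝 0) := by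
    rw [tendsto_zero_iff_norm_tendsto_zero]
    have : (fun ζ : ℂ => ‖1/ζ‖) = fun ζ : ℂ => (‖ζ‖)⁻¹ := by
      funext ζ; simp [map_div₀]
    rw [this]
    exact habs.inv_tendsto_atTop
  have h2 : Tendsto (fun ζ : ℂ => -Complex.log (1-ζ)/ζ^2)
      (Filter.comap (fun z : ℂ => ‖z‖) atTop) (𝓝 0) := by
    apply squeeze_zero_norm' (a := fun ζ : ℂ => (1 + π) / ‖ζ‖)
    · filter_upwards [hev2] with ζ hζ
      have h0 : (0:ℝ) < ‖ζ‖ := by linarith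
      have : ‖-Complex.log (1-ζ)/ζ^2‖ = ‖Complex.log (1-ζ)‖ / (‖ζ‖)^2 := by
        simp [map_div₀, map_pow]
      rw [this]
      rw [div_le_div_iff₀ (by positivity) h0]
      have hl := abs_log_le hζ
      have haa : ‖ζ‖ ≤ (‖ζ‖)^2 := by nlinarith
      nlinarith [mul_le_mul_of_nonneg_right hl h0.le, Real.pi_pos]
    · exact tendsto_const_nhds.div_atTop habs
  have h3 := (h2.sub h1).sub (tendsto_const_nhds (x := (1/2 : ℂ)))
  rw [show (0:ℂ) - 0 - 1/2 = -1/2 by norm_num] at h3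
  apply h3.congr'
  filter_upwards [hev2] with ζ hζ
  have h0 : ζ ≠ 0 := by
    intro h; rw [h] at hζ; simp at hζ; linarith
  rw [ffun_ne ζ h0]

lemma ffun_zero : ffun 0 = 0 := if_pos rfl

lemma ffun_eventuallyEq {ζ : ℂ} (h : ζ ≠ 0) :
    ffun =ᶠ[𝓝 ζ] fun z => -Complex.log (1 - z) / z ^ 2 - 1 / z - 1 / 2 := by
  filter_upwards [eventually_ne_nhds h] with z hz using ffun_ne z hz

lemma ffun_differentiableAt {ζ : ℂ} (h0 : ζ ≠ 0) (h1 : 1 - ζ ∈ Complex.slitPlane) :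
    DifferentiableAt ℂ ffun ζ := by
  have hlog : DifferentiableAt ℂ (fun z : ℂ => Complex.log (1 - z)) ζ :=
    (Complex.differentiableAt_log h1).comp ζ
      ((differentiableAt_const 1).sub differentiableAt_id)
  have hd : DifferentiableAt ℂ (fun z : ℂ => -Complex.log (1 - z) / z ^ 2 - 1 / z - 1 / 2) ζ :=
    ((hlog.neg.div (differentiableAt_pow 2) (pow_ne_zero 2 h0)).sub
      ((differentiableAt_const 1).div differentiableAt_id h0)).sub (differentiableAt_const _)
  exact (ffun_eventuallyEq h0).differentiableAt_iff.mpr hd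

lemma logTaylor_three (z : ℂ) : Complex.logTaylor 3 z = z - z^2/2 := by
  simp [Complex.logTaylor, Finset.sum_range_succ]
  ring

lemma ffun_norm_le {ζ : ℂ} (h : ‖ζ‖ ≤ 1/2) : ‖ffun ζ‖ ≤ ‖ζ‖ := by
  rcases eq_or_ne ζ 0 with rfl | h0
  · simp [ffun_zero]
  · have ha : (0:ℝ) < ‖ζ‖ := norm_pos_iff.mpr h0
    have hrw : ffun ζ = -((Complex.log (1-ζ) + ζ + ζ^2/2)/ζ^2) := by
      rw [ffun_ne _ h0]
      field_simp
      ring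
    have hz1 : ‖(-ζ : ℂ)‖ < 1 := by
      rw [norm_neg]; linarith
    have hb := Complex.norm_log_sub_logTaylor_le 2 hz1
    rw [logTaylor_three] at hb
    have he : Complex.log (1 + -ζ) - (-ζ - (-ζ)^2/2) = Complex.log (1-ζ) + ζ + ζ^2/2 := by
      ring_nf
    rw [he] at hb
    simp only [norm_neg] at hb hz1 ⊢
    rw [hrw]
    have : ‖-((Complex.log (1-ζ) + ζ + ζ^2/2)/ζ^2)‖
        = ‖Complex.log (1-ζ) + ζ + ζ^2/2‖ / (‖ζ‖)^2 := by
      simp [map_div₀, map_pow]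
    norm_num at hb
    rw [this]
    rw [div_le_iff₀ (by positivity)]
    have hinv : (1 - ‖ζ‖)⁻¹ ≤ 2 := by
      rw [inv_le_comm₀ (by linarith) (by norm_num)]
      linarith
    have h3 : ‖ζ‖ ^ 3 * (1 - ‖ζ‖)⁻¹ / 3
        ≤ ‖ζ‖ * ‖ζ‖ ^ 2 := by
      rw [div_le_iff₀ (by norm_num : (0:ℝ) < 3)]
      have hcube : (0:ℝ) < ‖ζ‖ ^ 3 := by positivity
      nlinarith [mul_le_mul_of_nonneg_left hinv hcube.le]
    calc ‖Complex.log (1-ζ) + ζ + ζ^2/2‖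
        ≤ ‖ζ‖ ^ 3 * (1 - ‖ζ‖)⁻¹ / 3 := hb
      _ ≤ ‖ζ‖ * ‖ζ‖ ^ 2 := h3

lemma ffun_continuousAt_zero : ContinuousAt ffun 0 := by
  have h : Tendsto ffun (𝓝 0) (𝓝 0) := by
    apply squeeze_zero_norm' (a := fun ζ : ℂ => ‖ζ‖)
    · filter_upwards [Metric.ball_mem_nhds (0:ℂ) (by norm_num : (0:ℝ) < 1/2)] with ζ hζ
      apply ffun_norm_le
      rw [Metric.mem_ball, Complex.dist_eq, sub_zero] at hζ
      linarith
    · exact continuous_norm.tendsto' 0 0 (by simp)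
  rw [ContinuousAt, ffun_zero]
  exact h

lemma ffun_re_near_one {w : ℂ} (hw : w ≠ 1) (hd : ‖w - 1‖ ≤ 1/10) :
    -(Real.log (‖1 - w‖) / 2) - 4 ≤ (ffun w).re := by
  have habs1w : ‖1 - w‖ = ‖w - 1‖ := norm_sub_rev 1 w
  have h0 : w ≠ 0 := by
    intro h; rw [h] at hd; simp at hd; norm_num at hd
  have ha : (9:ℝ)/10 ≤ ‖w‖ := by
    have h := norm_sub_norm_le (1:ℂ) (1 - w)
    rw [show (1:ℂ) - (1 - w) = w by ring] at h
    simp only [norm_one] at h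
    rw [habs1w] at h
    linarith
  have hb : ‖1 + w‖ ≤ 21/10 := by
    have : (1:ℂ) + w = 2 + (w - 1) := by ring
    rw [this]
    calc ‖2 + (w-1)‖ ≤ ‖2‖ + ‖w-1‖ := norm_add_le _ _
      _ ≤ 21/10 := by rw [Complex.norm_two]; linarith
  set u : ℂ := (w^2)⁻¹ with hu_def
  have hu : ‖u - 1‖ ≤ 1/2 := by
    have he : u - 1 = (1-w)*(1+w)/w^2 := by
      field_simp [hu_def]
      rw [hu_def, sub_mul, inv_mul_cancel₀ (pow_ne_zero 2 h0)]
      ring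
    rw [he]
    have : ‖(1-w)*(1+w)/w^2‖ =
        ‖1-w‖ * ‖1+w‖ / (‖w‖)^2 := by
      simp [map_div₀, map_mul, map_pow]
    rw [this, div_le_iff₀ (by positivity)]
    have h1 : ‖1-w‖ ≤ 1/10 := by rw [habs1w]; exact hd
    nlinarith [norm_nonneg (1+w), norm_nonneg (1-w)]
  have hure : (1:ℝ)/2 ≤ u.re := by
    have h1 := Complex.abs_re_le_norm (u - 1)
    have h2 : (u - 1).re = u.re - 1 := by simp [Complex.sub_re]
    rw [h2] at h1
    have h4 := abs_le.mp (h1.trans hu)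
    linarith [h4.1]
  have huim : |u.im| ≤ 1/2 := by
    have := Complex.abs_im_le_norm (u - 1)
    have h2 : (u - 1).im = u.im := by simp [Complex.sub_im]
    rw [h2] at this
    linarith
  have hℓ : Real.log (‖1 - w‖) ≤ 0 := by
    apply Real.log_nonpos (norm_nonneg _)
    rw [habs1w]; linarith
  have h1w : (1/w).re ≤ (10/9 : ℝ) := by
    have h1 : |(1/w).re| ≤ ‖1/w‖ := Complex.abs_re_le_norm _
    have h2 : ‖1/w‖ = (‖w‖)⁻¹ := by simp [map_div₀]
    have h3 : (‖w‖)⁻¹ ≤ 10/9 := by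
      rw [inv_le_comm₀ (by linarith) (by norm_num)]
      linarith
    linarith [le_abs_self ((1/w).re), h2 ▸ h1]
  rw [ffun_ne _ h0]
  have hrw : -Complex.log (1 - w) / w ^ 2 = -(Complex.log (1-w) * u) := by
    rw [hu_def, div_eq_mul_inv]; ring
  rw [hrw]
  have hhalf : ((1:ℂ)/2).re = 1/2 := by norm_num
  simp only [Complex.sub_re, Complex.neg_re, Complex.mul_re, Complex.log_re, Complex.log_im,
    hhalf]
  set ℓ := Real.log (‖1 - w‖)
  set ψ := (1 - w).arg
  have p1 : (-ℓ) * (1/2) ≤ (-ℓ) * u.re := by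
    apply mul_le_mul_of_nonneg_left hure
    linarith
  have p2 : |ψ * u.im| ≤ π * (1/2) := by
    rw [abs_mul]
    exact mul_le_mul (Complex.abs_arg_le_pi _) huim (abs_nonneg _) Real.pi_pos.le
  have p2' := neg_abs_le (ψ * u.im)
  have hπ := Real.pi_le_four
  linarith

noncomputable def Ffun : ℂ → ℂ := fun z => if z = 1 then 0 else Complex.exp (-ffun z)

lemma Ffun_norm (z : ℂ) (h : z ≠ 1) : ‖Ffun z‖ = Real.exp (-(ffun z).re) := by
  rw [Ffun, if_neg h]
  simp [Complex.norm_exp]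

lemma Ffun_tendsto_one : Tendsto Ffun (𝓝[≠] (1:ℂ)) (𝓝 0) := by
  have habs : Tendsto (fun z : ℂ => ‖1 - z‖) (𝓝[≠] (1:ℂ)) (𝓝[>] 0) := by
    rw [tendsto_nhdsWithin_iff]
    constructor
    · have hc : Continuous fun z : ℂ => ‖1 - z‖ :=
        continuous_norm.comp (continuous_const.sub continuous_id)
      have h := hc.tendsto (1:ℂ)
      simp only [sub_self, norm_zero] at h
      exact h.mono_left nhdsWithin_le_nhds
    · filter_upwards [self_mem_nhdsWithin] with z hz
      simp only [Set.mem_Ioi]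
      have : (1:ℂ) - z ≠ 0 := sub_ne_zero.mpr (Ne.symm hz)
      exact norm_pos_iff.mpr this
  have hlog : Tendsto (fun z : ℂ => Real.log (‖1 - z‖) / 2 + 4)
      (𝓝[≠] (1:ℂ)) atBot :=
    tendsto_atBot_add_const_right _ 4
      ((Real.tendsto_log_nhdsGT_zero.comp habs).atBot_div_const (by norm_num))
  have hexp : Tendsto (fun z : ℂ => Real.exp (Real.log (‖1 - z‖) / 2 + 4))
      (𝓝[≠] (1:ℂ)) (𝓝 0) := Real.tendsto_exp_atBot.comp hlog
  apply squeeze_zero_norm' _ hexp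
  filter_upwards [self_mem_nhdsWithin,
    mem_nhdsWithin_of_mem_nhds (Metric.ball_mem_nhds (1:ℂ) (by norm_num : (0:ℝ) < 1/10))]
    with z hz hball
  have hz1 : z ≠ 1 := hz
  have hd : ‖z - 1‖ ≤ 1/10 := by
    rw [Metric.mem_ball, Complex.dist_eq] at hball
    linarith
  rw [Ffun_norm z hz1, Real.exp_le_exp]
  have := ffun_re_near_one hz1 hd
  linarith

lemma Ffun_continuousOn : ContinuousOn Ffun {z : ℂ | z.im ≤ 0} := by
  intro z hz
  rcases eq_or_ne z 1 with rfl | hz1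
  · rw [← continuousWithinAt_diff_self]
    have hle : 𝓝[{z : ℂ | z.im ≤ 0} \ {1}] (1:ℂ) ≤ 𝓝[≠] (1:ℂ) :=
      nhdsWithin_mono _ (fun y hy => hy.2)
    have h0 : Ffun 1 = 0 := if_pos rfl
    rw [ContinuousWithinAt, h0]
    exact Ffun_tendsto_one.mono_left hle
  rcases eq_or_ne z 0 with rfl | hz0
  · have hne : ∀ᶠ y : ℂ in 𝓝 0, y ≠ 1 := eventually_ne_nhds (by norm_num)
    have heq : (fun y : ℂ => Complex.exp (-ffun y)) =ᶠ[𝓝 0] Ffun := by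
      filter_upwards [hne] with y hy
      rw [Ffun, if_neg hy]
    exact ((Complex.continuous_exp.continuousAt.comp
      ffun_continuousAt_zero.neg).congr heq).continuousWithinAt
  by_cases hsp : 1 - z ∈ Complex.slitPlane
  · have hda : DifferentiableAt ℂ ffun z := ffun_differentiableAt hz0 hsp
    have hne : ∀ᶠ y : ℂ in 𝓝 z, y ≠ 1 := eventually_ne_nhds hz1
    have heq : (fun y : ℂ => Complex.exp (-ffun y)) =ᶠ[𝓝 z] Ffun := by
      filter_upwards [hne] with y hy
      rw [Ffun, if_neg hy]
    exact ((Complex.continuous_exp.continuousAt.comp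
      hda.continuousAt.neg).congr heq).continuousWithinAt
  · -- z is on the cut: z.im = 0, z.re > 1
    rw [Complex.mem_slitPlane_iff] at hsp
    push_neg at hsp
    have him0 : z.im = 0 := by
      have := hsp.2
      simpa [Complex.sub_im] using this
    have hre1 : 1 < z.re := by
      have h1 := hsp.1
      rw [Complex.sub_re, Complex.one_re] at h1
      have : z.re ≠ 1 := by
        intro h
        exact hz1 (Complex.ext (by rw [h, Complex.one_re]) (by rw [him0, Complex.one_im]))
      cases' lt_or_eq_of_le (by linarith : 1 ≤ z.re) with h h
      · exact h
      · exact absurd h.symm this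
    have hlog : ContinuousWithinAt (fun y : ℂ => Complex.log (1 - y)) {z : ℂ | z.im ≤ 0} z := by
      have hmain := Complex.continuousWithinAt_log_of_re_neg_of_im_zero
        (show ((1:ℂ) - z).re < 0 by rw [Complex.sub_re, Complex.one_re]; linarith)
        (show ((1:ℂ) - z).im = 0 by rw [Complex.sub_im, Complex.one_im]; simp [him0])
      have hsub : ContinuousWithinAt (fun y : ℂ => 1 - y) {z : ℂ | z.im ≤ 0} z :=
        (continuous_const.sub continuous_id).continuousWithinAt
      apply hmain.comp hsub
      intro y hy
      simp only [Set.mem_setOf_eq, Complex.sub_im, Complex.one_im]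
      simp only [Set.mem_setOf_eq] at hy
      linarith
    have hform : ContinuousWithinAt
        (fun y : ℂ => Complex.exp (-(-Complex.log (1 - y) / y ^ 2 - 1 / y - 1 / 2)))
        {z : ℂ | z.im ≤ 0} z := by
      apply ContinuousWithinAt.comp Complex.continuous_exp.continuousAt.continuousWithinAt _
        (Set.mapsTo_univ _ _)
      apply ContinuousWithinAt.neg
      apply ContinuousWithinAt.sub
      apply ContinuousWithinAt.sub
      · exact hlog.neg.div (continuousWithinAt_id.pow 2) (pow_ne_zero 2 hz0)
      · exact continuousWithinAt_const.div continuousWithinAt_id hz0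
      · exact continuousWithinAt_const
    apply hform.congr_of_eventuallyEq
    · filter_upwards [mem_nhdsWithin_of_mem_nhds (eventually_ne_nhds hz1),
        mem_nhdsWithin_of_mem_nhds (eventually_ne_nhds hz0)] with y hy1 hy0
      rw [Ffun, if_neg hy1, ffun_ne y hy0]
    · rw [Ffun, if_neg hz1, ffun_ne z hz0]

lemma Ffun_big : ∃ R₀ : ℝ, 2 ≤ R₀ ∧ ∀ z : ℂ, R₀ ≤ ‖z‖ → ‖Ffun z‖ ≤ Real.exp 1 := by
  have h2 : ∀ᶠ z : ℂ in Filter.comap (fun z : ℂ => ‖z‖) atTop, ‖Ffun z‖ ≤ Real.exp 1 := by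
    have hev2 : ∀ᶠ ζ : ℂ in Filter.comap (fun z : ℂ => ‖z‖) atTop, 2 ≤ ‖ζ‖ :=
      (tendsto_comap (f := fun z : ℂ => ‖z‖)).eventually_ge_atTop 2
    have hdist := (Metric.tendsto_nhds.mp ffun_tendsto) (1/4) (by norm_num)
    filter_upwards [hev2, hdist] with z hz2 hzd
    have hz1 : z ≠ 1 := by
      intro h; rw [h] at hz2; simp at hz2
    rw [Ffun_norm z hz1, Real.exp_le_exp]
    rw [Complex.dist_eq] at hzd
    have h1 : |(ffun z - (-1/2)).re| ≤ ‖ffun z - (-1/2)‖ :=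
      Complex.abs_re_le_norm _
    have h2 : (ffun z - (-1/2)).re = (ffun z).re + 1/2 := by
      simp [Complex.sub_re]
      norm_num
    rw [h2] at h1
    have := abs_le.mp (h1.trans hzd.le)
    linarith [this.1]
  rw [Filter.eventually_comap] at h2
  rcases eventually_atTop.mp h2 with ⟨R₀, hR⟩
  refine ⟨max R₀ 2, le_max_right _ _, fun z hz => ?_⟩
  exact hR (‖z‖) (le_trans (le_max_left _ _) hz) z rfl

lemma Ffun_bound_LHP {ζ : ℂ} (hζ : ζ.im < 0) : ‖Ffun ζ‖ ≤ Real.exp 1 := by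
  obtain ⟨R₀, hR₀2, hR₀⟩ := Ffun_big
  set R : ℝ := max R₀ (‖ζ‖ + 1) with hR_def
  set U : Set ℂ := {z : ℂ | z.im < 0} ∩ Metric.ball 0 R with hU_def
  have hUopen : IsOpen U := (isOpen_lt continuous_im continuous_const).inter Metric.isOpen_ball
  have hUb : Bornology.IsBounded U := Metric.isBounded_ball.subset Set.inter_subset_right
  have hclosure : closure U ⊆ {z : ℂ | z.im ≤ 0} := by
    have h1 : closure U ⊆ closure {z : ℂ | z.im < 0} := closure_mono Set.inter_subset_left
    have h2 : closure {z : ℂ | z.im < 0} ⊆ {z : ℂ | z.im ≤ 0} :=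
      closure_minimal (fun y (hy : y.im < 0) => le_of_lt hy)
        (isClosed_le continuous_im continuous_const)
    exact h1.trans h2
  have hd : DiffContOnCl ℂ Ffun U := by
    constructor
    · intro z hz
      have hz' : z.im < 0 := hz.1
      have h0 : z ≠ 0 := by intro h; rw [h] at hz'; simp at hz'
      have h1 : z ≠ 1 := by intro h; rw [h] at hz'; simp at hz'
      have hsp : 1 - z ∈ Complex.slitPlane := by
        rw [Complex.mem_slitPlane_iff]
        right
        rw [Complex.sub_im, Complex.one_im]
        intro h
        rw [show z.im = 0 by linarith] at hz'
        exact lt_irrefl 0 hz'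
      have hdf : DifferentiableAt ℂ (fun y => Complex.exp (-ffun y)) z :=
        ((ffun_differentiableAt h0 hsp).neg).cexp
      have heq : Ffun =ᶠ[𝓝 z] fun y => Complex.exp (-ffun y) := by
        filter_upwards [eventually_ne_nhds h1] with y hy
        rw [Ffun, if_neg hy]
      exact (heq.differentiableAt_iff.mpr hdf).differentiableWithinAt
    · exact Ffun_continuousOn.mono hclosure
  have hfr : ∀ z ∈ frontier U, ‖Ffun z‖ ≤ Real.exp 1 := by
    intro z hzf
    have hzc : z ∈ closure U := frontier_subset_closure hzf
    have him : z.im ≤ 0 := hclosure hzc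
    have hnotU : z ∉ U := by
      rw [hUopen.frontier_eq] at hzf
      exact hzf.2
    rcases lt_or_ge z.im 0 with hlt | hge
    · -- must have abs z ≥ R ≥ R₀
      have habs : R ≤ ‖z‖ := by
        by_contra hc
        push_neg at hc
        exact hnotU ⟨hlt, by rwa [Metric.mem_ball, Complex.dist_eq, sub_zero]⟩
      exact hR₀ z (le_trans (le_max_left _ _) habs)
    · -- real point
      have him0 : z.im = 0 := le_antisymm him hge
      rcases eq_or_ne z 1 with rfl | hz1
      · rw [show Ffun 1 = 0 from if_pos rfl]
        simp [Real.exp_pos]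
        positivity
      · have hzre : z = ((z.re : ℝ) : ℂ) := Complex.ext rfl (by simp [him0])
        have hre1 : z.re ≠ 1 := by
          intro h
          exact hz1 (Complex.ext (by rw [h, Complex.one_re]) (by rw [him0, Complex.one_im]))
        rw [Ffun_norm z hz1, Real.exp_le_exp]
        have : -1 ≤ (ffun z).re := by
          rw [hzre]
          exact ffun_re_real_ge hre1
        linarith
  have hζU : ζ ∈ closure U := by
    apply subset_closure
    refine ⟨hζ, ?_⟩
    rw [Metric.mem_ball, Complex.dist_eq, sub_zero]
    calc ‖ζ‖ < ‖ζ‖ + 1 := by linarith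
      _ ≤ R := le_max_right _ _
  exact Complex.norm_le_of_forall_mem_frontier_norm_le hUb hd hfr hζU

lemma ffun_re_ge_of_im_neg {ζ : ℂ} (hζ : ζ.im < 0) : -1 ≤ (ffun ζ).re := by
  have h := Ffun_bound_LHP hζ
  have h1 : ζ ≠ 1 := by intro h'; rw [h'] at hζ; simp at hζ
  rw [Ffun_norm ζ h1, Real.exp_le_exp] at h
  linarith

lemma ffun_re_gt_of_im_neg {ζ₀ : ℂ} (hζ : ζ₀.im < 0) : -1 < (ffun ζ₀).re := by
  rcases lt_or_eq_of_le (ffun_re_ge_of_im_neg hζ) with h | heq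
  · exact h
  exfalso
  set G : ℂ → ℂ := fun z => Complex.exp (-ffun z) with hG_def
  set U : Set ℂ := {z : ℂ | z.im < 0} with hU_def
  have hUopen : IsOpen U := isOpen_lt continuous_im continuous_const
  have hGnorm : ∀ z : ℂ, z.im < 0 → ‖G z‖ = Real.exp (-(ffun z).re) := by
    intro z hz
    have h1 : z ≠ 1 := by intro h'; rw [h'] at hz; simp at hz
    have : G z = Ffun z := by rw [hG_def, Ffun, if_neg h1]
    rw [this, Ffun_norm z h1]
  have hζ₀U : ζ₀ ∈ U := hζ
  have hmax : IsMaxOn (norm ∘ G) U ζ₀ := by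
    intro z hz
    have hz' : z.im < 0 := hz
    simp only [Set.mem_setOf_eq, Function.comp_apply]
    rw [hGnorm z hz', hGnorm ζ₀ hζ, ← heq, Real.exp_le_exp]
    have := ffun_re_ge_of_im_neg hz'
    linarith
  have hdiff : DifferentiableOn ℂ G U := by
    intro z hz
    have hz' : z.im < 0 := hz
    have h0 : z ≠ 0 := by intro h'; rw [h'] at hz'; simp at hz'
    have hsp : 1 - z ∈ Complex.slitPlane := by
      rw [Complex.mem_slitPlane_iff]
      right
      rw [Complex.sub_im, Complex.one_im]
      intro h'
      rw [show z.im = 0 by linarith] at hz'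
      exact lt_irrefl 0 hz'
    exact (((ffun_differentiableAt h0 hsp).neg).cexp).differentiableWithinAt
  have heqon := Complex.eqOn_of_isPreconnected_of_isMaxOn_norm
    (convex_halfSpace_im_lt 0).isPreconnected hUopen hdiff hζ₀U hmax
  have hre : ∀ z : ℂ, z.im < 0 → (ffun z).re = -1 := by
    intro z hz
    have hgz := heqon hz
    have hn : ‖G z‖ = ‖G ζ₀‖ := by rw [hgz]; rfl
    rw [hGnorm z hz, hGnorm ζ₀ hζ, ← heq] at hn
    have := Real.exp_injective hn
    linarith
  have hmap : Tendsto (fun t : ℝ => (-(t:ℂ)) * Complex.I) atTop (Filter.comap (fun z : ℂ => ‖z‖) atTop) := by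
    rw [tendsto_comap_iff]
    have heq' : (fun t : ℝ => ‖(-(t:ℂ)) * Complex.I‖) =ᶠ[atTop] fun t : ℝ => t := by
      filter_upwards [eventually_ge_atTop (0:ℝ)] with t ht
      simp [map_mul, Complex.norm_real, Real.norm_eq_abs, _root_.abs_of_nonneg ht]
    exact tendsto_id.congr' heq'.symm
  have hlim : Tendsto (fun t : ℝ => (ffun ((-(t:ℂ)) * Complex.I)).re) atTop (𝓝 (-1/2 : ℝ)) := by
    have h1 := ffun_tendsto.comp hmap
    have h2 := (Complex.continuous_re.tendsto (-1/2 : ℂ)).comp h1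
    simpa [Function.comp_def] using h2
  have hev : (fun t : ℝ => (ffun ((-(t:ℂ)) * Complex.I)).re) =ᶠ[atTop] fun _ => (-1 : ℝ) := by
    filter_upwards [eventually_gt_atTop (0:ℝ)] with t ht
    apply hre
    simp [Complex.mul_im]
    linarith
  have := tendsto_nhds_unique (hlim.congr' hev) tendsto_const_nhds
  norm_num at this

lemma ffun_conj {ζ : ℂ} (h : ζ.im ≠ 0) :
    ffun ((starRingEnd ℂ) ζ) = (starRingEnd ℂ) (ffun ζ) := by
  have h0 : ζ ≠ 0 := by intro h'; rw [h'] at h; simp at h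
  have h0' : (starRingEnd ℂ) ζ ≠ 0 := by simpa using h0
  rw [ffun_ne _ h0', ffun_ne _ h0]
  have hlog : Complex.log (1 - (starRingEnd ℂ) ζ) = (starRingEnd ℂ) (Complex.log (1 - ζ)) := by
    rw [show (1:ℂ) - (starRingEnd ℂ) ζ = (starRingEnd ℂ) (1 - ζ) by rw [map_sub, map_one]]
    apply Complex.log_conj
    intro harg
    rw [Complex.arg_eq_pi_iff] at harg
    apply h
    have h2 := harg.2
    rw [Complex.sub_im, Complex.one_im] at h2
    linarith
  rw [hlog]
  simp [map_sub, map_div₀, map_neg, map_pow, map_one, map_ofNat]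

theorem stmt_16 :
    (∀ ζ : ℂ, ¬(ζ.im = 0 ∧ 1 ≤ ζ.re) → -1 < (ffun ζ).re)
    ∧ (∀ x : ℝ, x ≠ 1 → -1 ≤ (ffun x).re ∧ ((ffun x).re = -1 ↔ x = 2))
    ∧ Tendsto ffun (Filter.comap (fun z : ℂ => ‖z‖) atTop) (nhds (-1 / 2 : ℂ)) := by
  refine ⟨?_, ?_, by simpa using ffun_tendsto⟩
  · intro ζ hζ
    rcases lt_trichotomy ζ.im 0 with h | h | h
    · exact ffun_re_gt_of_im_neg h
    · have hre : ζ.re < 1 := by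
        by_contra hc
        push_neg at hc
        exact hζ ⟨h, hc⟩
      have hζeq : ζ = ((ζ.re : ℝ) : ℂ) := Complex.ext rfl (by simp [h])
      rw [hζeq]
      exact ffun_re_real_gt (by linarith) (by linarith)
    · have h' : ((starRingEnd ℂ) ζ).im < 0 := by simp [Complex.conj_im]; linarith
      have hgt := ffun_re_gt_of_im_neg h'
      rw [ffun_conj (ne_of_gt h)] at hgt
      simpa [Complex.conj_re] using hgt
  · intro x hx
    refine ⟨ffun_re_real_ge hx, ?_, ?_⟩
    · intro heq
      by_contra hne
      exact absurd heq (ne_of_gt (ffun_re_real_gt hx hne))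
    · intro h2
      subst h2
      exact ffun_re_two
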